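/- Let O be a discrete valuation ring with uniformizer ϖ, and let n ≥ 1 and β ≥ 1 be integers. Let g ∈ GL_n(O) be a matrix all of whose off-diagonal entries lie in ϖ^βO. Then there exist unique matrices ℓ, d, u ∈ M_n(O) with g = ℓ·d·u, where ℓ is lower triangular unipotent with all strictly-lower entries in ϖ^βO, d is diagonal with all diagonal entries in O^×, and u is upper triangular unipotent with all strictly-upper entries in ϖ^βO. Conversely, every such product ℓ·d·u lies in GL_n(O) and has all off-diagonal entries in ϖ^βO. (Iwahori factorization: ker(GL_n(O) → GL_n(O/ϖ^β))·T_n(O) is identified with the product N⁻_n(ϖ^βO) × T_n(O) × N_n(ϖ^βO).) -/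

import Mathlib

open Matrix Finset

namespace IwahoriAux

set_option linter.unusedSectionVars false
set_option maxHeartbeats 1000000





variable {R : Type*} [CommRing R]

/-- Block matrix on `Fin (n+1)` from a scalar, a column, a row, and an `n×n` block. -/
def blk {n : ℕ} (a : R) (c b : Fin n → R) (A : Matrix (Fin n) (Fin n) R) :
    Matrix (Fin (n + 1)) (Fin (n + 1)) R :=
  Matrix.of fun i j =>
    Fin.cases (Fin.cases a b j) (fun i' => Fin.cases (c i') (fun j' => A i' j') j) i

@[simp] lemma blk_zero_zero {n : ℕ} (a : R) (c b : Fin n → R) (A) :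
    blk a c b A 0 0 = a := rfl

@[simp] lemma blk_zero_succ {n : ℕ} (a : R) (c b : Fin n → R) (A) (j : Fin n) :
    blk a c b A 0 j.succ = b j := rfl

@[simp] lemma blk_succ_zero {n : ℕ} (a : R) (c b : Fin n → R) (A) (i : Fin n) :
    blk a c b A i.succ 0 = c i := rfl

@[simp] lemma blk_succ_succ {n : ℕ} (a : R) (c b : Fin n → R) (A) (i j : Fin n) :
    blk a c b A i.succ j.succ = A i j := rfl

lemma blk_mul_blk {n : ℕ} (a a' : R) (c b c' b' : Fin n → R) (A A') :
    blk a c b A * blk a' c' b' A' =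
      blk (a * a' + ∑ k, b k * c' k)
        (fun i => c i * a' + ∑ k, A i k * c' k)
        (fun j => a * b' j + ∑ k, b k * A' k j)
        (Matrix.of fun i j => c i * b' j + (A * A') i j) := by
  ext i j
  induction i using Fin.cases with
  | zero =>
    induction j using Fin.cases with
    | zero => simp [Matrix.mul_apply, Fin.sum_univ_succ]
    | succ j => simp [Matrix.mul_apply, Fin.sum_univ_succ]
  | succ i =>
    induction j using Fin.cases with
    | zero => simp [Matrix.mul_apply, Fin.sum_univ_succ]
    | succ j => simp [Matrix.mul_apply, Fin.sum_univ_succ]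

lemma key_mul {n : ℕ} {a x : R} (hax : a * x = 1) (c b : Fin n → R)
    (L D U : Matrix (Fin n) (Fin n) R) :
    blk 1 (fun i => c i * x) 0 L * blk a 0 0 D * blk 1 0 (fun j => x * b j) U =
      blk a c b (Matrix.of fun i j => c i * x * b j + (L * D * U) i j) := by
  have hxa : x * a = 1 := by rwa [mul_comm]
  rw [blk_mul_blk, blk_mul_blk]
  simp only [Pi.zero_apply, mul_zero, zero_mul, Finset.sum_const_zero, add_zero, zero_add,
    mul_one, one_mul, Matrix.of_apply]
  ext i j
  induction i using Fin.cases with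
  | zero =>
    induction j using Fin.cases with
    | zero => rfl
    | succ j =>
      simp only [blk_zero_succ]
      rw [← mul_assoc, hax, one_mul]
  | succ i =>
    induction j using Fin.cases with
    | zero =>
      simp only [blk_succ_zero]
      rw [mul_assoc, hxa, mul_one]
    | succ j =>
      simp only [blk_succ_succ, Matrix.of_apply, ← Matrix.mul_assoc]
      have h1 : c i * x * a * (x * b j) = c i * x * b j := by
        calc c i * x * a * (x * b j) = c i * (x * a) * (x * b j) := by ring
          _ = c i * (x * b j) := by rw [hxa, mul_one]
          _ = c i * x * b j := by ring
      rw [h1]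
      congr 1

lemma det_blk_diag {n : ℕ} (a : R) (D : Matrix (Fin n) (Fin n) R) :
    (blk a 0 0 D).det = a * D.det := by
  rw [Matrix.det_succ_row_zero]
  rw [Fin.sum_univ_succ]
  have h0 : ∀ j : Fin n, blk a (0 : Fin n → R) 0 D 0 j.succ = 0 := by intro j; simp
  simp only [h0]
  simp only [mul_zero, zero_mul, Finset.sum_const_zero, add_zero]
  have : (blk a (0 : Fin n → R) 0 D).submatrix Fin.succ (Fin.succAbove 0) = D := by
    ext i j
    simp [Fin.zero_succAbove]
  rw [this]
  simp





variable {R : Type*} [CommRing R]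

lemma isUnit_diag [IsLocalRing R] (J : Ideal R) (hJ : ∀ x ∈ J, ¬IsUnit x)
    {n : ℕ} (g : Matrix (Fin n) (Fin n) R) (hdet : IsUnit g.det)
    (hoff : ∀ i j : Fin n, i ≠ j → g i j ∈ J) : ∀ i, IsUnit (g i i) := by
  have hJm : ∀ x ∈ J, x ∈ IsLocalRing.maximalIdeal R := fun x hx =>
    (IsLocalRing.mem_maximalIdeal x).2 (hJ x hx)
  have key : g.det - ∏ i, g i i ∈ IsLocalRing.maximalIdeal R := by
    rw [Matrix.det_apply]
    have h1 : (∑ σ : Equiv.Perm (Fin n), Equiv.Perm.sign σ • ∏ i, g (σ i) i)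
        = (∏ i, g i i) + ∑ σ ∈ Finset.univ.erase 1, Equiv.Perm.sign σ • ∏ i, g (σ i) i := by
      rw [← Finset.add_sum_erase _ _ (Finset.mem_univ (1 : Equiv.Perm (Fin n)))]
      simp
    rw [h1, add_sub_cancel_left]
    apply Submodule.sum_mem
    intro σ hσ
    obtain ⟨i, hi⟩ : ∃ i, σ i ≠ i := by
      by_contra h
      push_neg at h
      exact (Finset.mem_erase.1 hσ).1 (Equiv.ext h)
    have hterm : (∏ i, g (σ i) i) ∈ IsLocalRing.maximalIdeal R := by
      obtain ⟨cc, hcc⟩ := Finset.dvd_prod_of_mem (fun i => g (σ i) i) (Finset.mem_univ i)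
      rw [hcc]
      exact Ideal.mul_mem_right _ _ (hJm _ (hoff _ _ hi))
    rw [Units.smul_def, zsmul_eq_mul]
    exact Ideal.mul_mem_left _ _ hterm
  have hprod : IsUnit (∏ i, g i i) := by
    by_contra h
    have h2 : (∏ i, g i i) ∈ IsLocalRing.maximalIdeal R :=
      (IsLocalRing.mem_maximalIdeal _).2 h
    have h3 : g.det ∈ IsLocalRing.maximalIdeal R := by
      have := Submodule.add_mem _ key h2
      rwa [sub_add_cancel] at this
    exact (IsLocalRing.notMem_maximalIdeal.2 hdet) h3
  intro i
  exact isUnit_of_dvd_unit (Finset.dvd_prod_of_mem (fun i => g i i) (Finset.mem_univ i)) hprod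

lemma diag_mul {n : ℕ} {X Y : Matrix (Fin n) (Fin n) R}
    (hXY : ∀ k i : Fin n, k ≠ i → X i k = 0 ∨ Y k i = 0) (i : Fin n) :
    (X * Y) i i = X i i * Y i i := by
  rw [Matrix.mul_apply]
  apply Finset.sum_eq_single
  · intro k _ hk
    rcases hXY k i hk with h | h
    · rw [h, zero_mul]
    · rw [h, mul_zero]
  · intro h; exact absurd (Finset.mem_univ i) h

lemma diag_mul_lower {n : ℕ} {X Y : Matrix (Fin n) (Fin n) R}
    (hX : X.BlockTriangular OrderDual.toDual) (hY : Y.BlockTriangular OrderDual.toDual)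
    (i : Fin n) : (X * Y) i i = X i i * Y i i := by
  apply diag_mul
  intro k j hk
  rcases lt_or_gt_of_ne hk with h | h
  · exact Or.inr (hY h)
  · exact Or.inl (hX h)

lemma diag_mul_upper {n : ℕ} {X Y : Matrix (Fin n) (Fin n) R}
    (hX : X.BlockTriangular id) (hY : Y.BlockTriangular id)
    (i : Fin n) : (X * Y) i i = X i i * Y i i := by
  apply diag_mul
  intro k j hk
  rcases lt_or_gt_of_ne hk with h | h
  · exact Or.inl (hX h)
  · exact Or.inr (hY h)


variable {R : Type*} [CommRing R]

lemma exists_ldu [IsLocalRing R] (J : Ideal R) (hJ : ∀ x ∈ J, ¬IsUnit x) :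
    ∀ (n : ℕ) (g : Matrix (Fin n) (Fin n) R), IsUnit g.det →
      (∀ i j, i ≠ j → g i j ∈ J) →
      ∃ l d u : Matrix (Fin n) (Fin n) R,
        ((∀ i, l i i = 1) ∧ (∀ i j, i < j → l i j = 0) ∧ (∀ i j, j < i → l i j ∈ J)) ∧
        ((∀ i j, i ≠ j → d i j = 0) ∧ (∀ i, IsUnit (d i i))) ∧
        ((∀ i, u i i = 1) ∧ (∀ i j, j < i → u i j = 0) ∧ (∀ i j, i < j → u i j ∈ J)) ∧
        g = l * d * u := by
  intro n
  induction n with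
  | zero =>
    intro g _ _
    exact ⟨1, 1, 1, ⟨fun i => i.elim0, fun i => i.elim0, fun i => i.elim0⟩,
      ⟨fun i => i.elim0, fun i => i.elim0⟩,
      ⟨fun i => i.elim0, fun i => i.elim0, fun i => i.elim0⟩, Subsingleton.elim _ _⟩
  | succ n ih =>
    intro g hdet hoff
    have ha : IsUnit (g 0 0) := isUnit_diag J hJ g hdet hoff 0
    obtain ⟨ua, hua⟩ := ha
    set a : R := g 0 0 with ha_def
    set x : R := ↑ua⁻¹ with hx
    have hax : a * x = 1 := by rw [← hua, hx]; exact ua.mul_inv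
    set c : Fin n → R := fun i => g i.succ 0 with hc
    set b : Fin n → R := fun j => g 0 j.succ with hb
    set S : Matrix (Fin n) (Fin n) R :=
      Matrix.of (fun i j => g i.succ j.succ - c i * x * b j) with hS
    have hblk : ∀ (L D U : Matrix (Fin n) (Fin n) R), L * D * U = S →
        blk 1 (fun i => c i * x) 0 L * blk a 0 0 D * blk 1 0 (fun j => x * b j) U = g := by
      intro L D U hLDU
      rw [key_mul hax, hLDU]
      ext i j
      induction i using Fin.cases with
      | zero =>
        induction j using Fin.cases with
        | zero => rfl
        | succ j => rfl
      | succ i =>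
        induction j using Fin.cases with
        | zero => rfl
        | succ j =>
          simp only [blk_succ_succ, Matrix.of_apply, hS]
          ring
    have hSdet : IsUnit S.det := by
      have h1S : (1 : Matrix (Fin n) (Fin n) R) * S * 1 = S := by rw [one_mul, mul_one]
      have hg := hblk 1 S 1 h1S
      have hdet2 : ((blk 1 (fun i => c i * x) 0 (1 : Matrix (Fin n) (Fin n) R)).det *
          (blk a 0 0 S).det) * (blk 1 0 (fun j => x * b j) (1 : Matrix (Fin n) (Fin n) R)).det
          = g.det := by rw [← Matrix.det_mul, ← Matrix.det_mul, hg]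
      rw [← hdet2] at hdet
      have h2 : IsUnit ((blk a 0 0 S).det) :=
        isUnit_of_mul_isUnit_right (isUnit_of_mul_isUnit_left hdet)
      rw [det_blk_diag] at h2
      exact isUnit_of_mul_isUnit_right h2
    have hSoff : ∀ i j, i ≠ j → S i j ∈ J := by
      intro i j hij
      have h1 : g i.succ j.succ ∈ J := hoff _ _ ((Fin.succ_injective n).ne hij)
      have h2 : c i ∈ J := hoff _ _ (Fin.succ_ne_zero i)
      show g i.succ j.succ - c i * x * b j ∈ J
      exact Submodule.sub_mem _ h1 (Ideal.mul_mem_right _ _ (Ideal.mul_mem_right _ _ h2))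
    obtain ⟨l', d', u', ⟨hl1, hl2, hl3⟩, ⟨hd1, hd2⟩, ⟨hu1, hu2, hu3⟩, hSe⟩ := ih S hSdet hSoff
    refine ⟨blk 1 (fun i => c i * x) 0 l', blk a 0 0 d', blk 1 0 (fun j => x * b j) u',
      ⟨?_, ?_, ?_⟩, ⟨?_, ?_⟩, ⟨?_, ?_, ?_⟩, (hblk l' d' u' hSe.symm).symm⟩
    · intro i
      induction i using Fin.cases with
      | zero => rfl
      | succ i => exact hl1 i
    · intro i j hij
      induction i using Fin.cases with
      | zero =>
        induction j using Fin.cases with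
        | zero => exact absurd hij (lt_irrefl _)
        | succ j => rfl
      | succ i =>
        induction j using Fin.cases with
        | zero => exact absurd hij (Fin.not_lt_zero _)
        | succ j => exact hl2 i j (by rwa [Fin.succ_lt_succ_iff] at hij)
    · intro i j hji
      induction j using Fin.cases with
      | zero =>
        induction i using Fin.cases with
        | zero => exact absurd hji (lt_irrefl _)
        | succ i =>
          show c i * x ∈ J
          exact Ideal.mul_mem_right _ _ (hoff _ _ (Fin.succ_ne_zero i))
      | succ j =>
        induction i using Fin.cases with
        | zero => exact absurd hji (Fin.not_lt_zero _)
        | succ i => exact hl3 i j (by rwa [Fin.succ_lt_succ_iff] at hji)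
    · intro i j hij
      induction i using Fin.cases with
      | zero =>
        induction j using Fin.cases with
        | zero => exact absurd rfl hij
        | succ j => rfl
      | succ i =>
        induction j using Fin.cases with
        | zero => rfl
        | succ j => exact hd1 i j (fun h => hij (by rw [h]))
    · intro i
      induction i using Fin.cases with
      | zero => exact ⟨ua, hua⟩
      | succ i => exact hd2 i
    · intro i
      induction i using Fin.cases with
      | zero => rfl
      | succ i => exact hu1 i
    · intro i j hji
      induction j using Fin.cases with
      | zero =>
        induction i using Fin.cases with
        | zero => exact absurd hji (lt_irrefl _)
        | succ i => rfl
      | succ j =>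
        induction i using Fin.cases with
        | zero => exact absurd hji (Fin.not_lt_zero _)
        | succ i => exact hu2 i j (by rwa [Fin.succ_lt_succ_iff] at hji)
    · intro i j hij
      induction i using Fin.cases with
      | zero =>
        induction j using Fin.cases with
        | zero => exact absurd hij (lt_irrefl _)
        | succ j =>
          show x * b j ∈ J
          exact Ideal.mul_mem_left _ _ (hoff _ _ (Ne.symm (Fin.succ_ne_zero j)))
      | succ i =>
        induction j using Fin.cases with
        | zero => exact absurd hij (Fin.not_lt_zero _)
        | succ j => exact hu3 i j (by rwa [Fin.succ_lt_succ_iff] at hij)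


lemma uniq_ldu {n : ℕ} {l d u l' d' u' : Matrix (Fin n) (Fin n) R}
    (hl1 : ∀ i, l i i = 1) (hl2 : ∀ i j, i < j → l i j = 0)
    (hd1 : ∀ i j, i ≠ j → d i j = 0) (hd2 : ∀ i, IsUnit (d i i))
    (hu1 : ∀ i, u i i = 1) (hu2 : ∀ i j, j < i → u i j = 0)
    (hl1' : ∀ i, l' i i = 1) (hl2' : ∀ i j, i < j → l' i j = 0)
    (hd1' : ∀ i j, i ≠ j → d' i j = 0) (hd2' : ∀ i, IsUnit (d' i i))
    (hu1' : ∀ i, u' i i = 1) (hu2' : ∀ i j, j < i → u' i j = 0)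
    (heq : l * d * u = l' * d' * u') : l = l' ∧ d = d' ∧ u = u' := by
  -- triangularity
  have hLl : l.BlockTriangular OrderDual.toDual := fun i j h => hl2 i j h
  have hLl' : l'.BlockTriangular OrderDual.toDual := fun i j h => hl2' i j h
  have hUu : u.BlockTriangular id := fun i j h => hu2 i j h
  have hUu' : u'.BlockTriangular id := fun i j h => hu2' i j h
  have hDlow : d.BlockTriangular OrderDual.toDual := fun i j h => hd1 i j (ne_of_lt h)
  have hD'up : d'.BlockTriangular id := fun i j h => hd1' i j (ne_of_gt h)
  -- invertibility
  haveI : Invertible l := l.invertibleOfIsUnitDet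
    (by rw [Matrix.det_of_lowerTriangular l hLl]; simp [hl1])
  haveI : Invertible l' := l'.invertibleOfIsUnitDet
    (by rw [Matrix.det_of_lowerTriangular l' hLl']; simp [hl1'])
  haveI : Invertible u := u.invertibleOfIsUnitDet
    (by rw [Matrix.det_of_upperTriangular hUu]; simp [hu1])
  haveI : Invertible u' := u'.invertibleOfIsUnitDet
    (by rw [Matrix.det_of_upperTriangular hUu']; simp [hu1'])
  have hdiagdet : ∀ (e : Matrix (Fin n) (Fin n) R), (∀ i j, i ≠ j → e i j = 0) →
      (∀ i, IsUnit (e i i)) → IsUnit e.det := by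
    intro e he1 he2
    have : e = Matrix.diagonal (fun i => e i i) := by
      ext i j
      by_cases h : i = j
      · subst h; simp
      · rw [Matrix.diagonal_apply_ne _ h, he1 i j h]
    rw [this, Matrix.det_diagonal]
    have h4 := map_prod (Units.coeHom R) (fun i => (he2 i).unit) Finset.univ
    have : (∏ i, e i i) = ((∏ i, (he2 i).unit : Rˣ) : R) := by
      rw [show (((∏ i, (he2 i).unit : Rˣ)) : R) = Units.coeHom R (∏ i, (he2 i).unit) from rfl, h4]
      exact Finset.prod_congr rfl fun i _ => (he2 i).unit_spec.symm
    rw [this]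
    exact Units.isUnit _
  haveI : Invertible d := d.invertibleOfIsUnitDet (hdiagdet d hd1 hd2)
  haveI : Invertible d' := d'.invertibleOfIsUnitDet (hdiagdet d' hd1' hd2')
  -- the middle identity
  have hA : (l'⁻¹ * l) * d = d' * (u' * u⁻¹) := by
    have h2 : l * d = l' * (d' * (u' * u⁻¹)) := by
      calc l * d = l * d * u * u⁻¹ := (Matrix.mul_inv_cancel_right_of_invertible _ _).symm
        _ = l' * d' * u' * u⁻¹ := by rw [heq]
        _ = l' * (d' * (u' * u⁻¹)) := by rw [Matrix.mul_assoc, Matrix.mul_assoc]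
    calc (l'⁻¹ * l) * d = l'⁻¹ * (l * d) := by rw [Matrix.mul_assoc]
      _ = l'⁻¹ * (l' * (d' * (u' * u⁻¹))) := by rw [h2]
      _ = d' * (u' * u⁻¹) := by rw [Matrix.inv_mul_cancel_left_of_invertible]
  have hl'inv : (l'⁻¹).BlockTriangular OrderDual.toDual :=
    Matrix.blockTriangular_inv_of_blockTriangular hLl'
  have huinv : (u⁻¹).BlockTriangular id :=
    Matrix.blockTriangular_inv_of_blockTriangular hUu
  have hAlow : ((l'⁻¹ * l) * d).BlockTriangular OrderDual.toDual :=
    (hl'inv.mul hLl).mul hDlow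
  have hBup : (d' * (u' * u⁻¹)).BlockTriangular id := hD'up.mul (hUu'.mul huinv)
  -- diagonal entries of inverses of unitriangular matrices are 1
  have hl'inv_diag : ∀ i, (l'⁻¹) i i = 1 := by
    intro i
    have h1 := diag_mul_lower hLl' hl'inv i
    rw [Matrix.mul_inv_of_invertible, Matrix.one_apply_eq, hl1' i, one_mul] at h1
    exact h1.symm
  have huinv_diag : ∀ i, (u⁻¹) i i = 1 := by
    intro i
    have h1 := diag_mul_upper hUu huinv i
    rw [Matrix.mul_inv_of_invertible, Matrix.one_apply_eq, hu1 i, one_mul] at h1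
    exact h1.symm
  -- diag of A is d, diag of B is d'
  have hAdiag : ∀ i, ((l'⁻¹ * l) * d) i i = d i i := by
    intro i
    rw [diag_mul_lower (hl'inv.mul hLl) hDlow, diag_mul_lower hl'inv hLl,
      hl'inv_diag, hl1, one_mul, one_mul]
  have hBdiag : ∀ i, (d' * (u' * u⁻¹)) i i = d' i i := by
    intro i
    rw [diag_mul_upper hD'up (hUu'.mul huinv), diag_mul_upper hUu' huinv,
      huinv_diag, hu1', one_mul, mul_one]
  -- A = d
  have hAd : (l'⁻¹ * l) * d = d := by
    ext i j
    by_cases hij : i = j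
    · subst hij; exact hAdiag i
    · rw [hd1 i j hij]
      rcases lt_or_gt_of_ne hij with h | h
      · exact hAlow h
      · rw [hA]; exact hBup h
  have hdd' : d = d' := by
    ext i j
    by_cases hij : i = j
    · subst hij
      rw [← hAdiag i, hA, hBdiag i]
    · rw [hd1 i j hij, hd1' i j hij]
  have hll' : l = l' := by
    have h3 : l'⁻¹ * l = 1 := by
      calc l'⁻¹ * l = (l'⁻¹ * l) * d * d⁻¹ := (Matrix.mul_inv_cancel_right_of_invertible _ _).symm
        _ = d * d⁻¹ := by rw [hAd]
        _ = 1 := Matrix.mul_inv_of_invertible d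
    calc l = l' * (l'⁻¹ * l) := (Matrix.mul_inv_cancel_left_of_invertible _ _).symm
      _ = l' * 1 := by rw [h3]
      _ = l' := mul_one l'
  refine ⟨hll', hdd', ?_⟩
  have heq2 : (l * d) * u = (l * d) * u' := by
    rw [Matrix.mul_assoc] at heq ⊢
    rw [heq, hll', hdd']
  haveI : Invertible (l * d) := invertibleMul l d
  calc u = (l * d)⁻¹ * ((l * d) * u) := by rw [Matrix.inv_mul_cancel_left_of_invertible]
    _ = (l * d)⁻¹ * ((l * d) * u') := by rw [heq2]
    _ = u' := by rw [Matrix.inv_mul_cancel_left_of_invertible]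


lemma isUnit_det_of_diag {n : ℕ} (e : Matrix (Fin n) (Fin n) R)
    (he1 : ∀ i j, i ≠ j → e i j = 0) (he2 : ∀ i, IsUnit (e i i)) : IsUnit e.det := by
  have hdiag : e = Matrix.diagonal (fun i => e i i) := by
    ext i j
    by_cases h : i = j
    · subst h; simp
    · rw [Matrix.diagonal_apply_ne _ h, he1 i j h]
  rw [hdiag, Matrix.det_diagonal]
  have h4 := map_prod (Units.coeHom R) (fun i => (he2 i).unit) Finset.univ
  have h5 : (∏ i, e i i) = ((∏ i, (he2 i).unit : Rˣ) : R) := by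
    rw [show (((∏ i, (he2 i).unit : Rˣ)) : R) = Units.coeHom R (∏ i, (he2 i).unit) from rfl, h4]
    exact Finset.prod_congr rfl fun i _ => (he2 i).unit_spec.symm
  rw [h5]
  exact Units.isUnit _

lemma conv_mem {n : ℕ} (J : Ideal R) {l d u : Matrix (Fin n) (Fin n) R}
    (hl1 : ∀ i, l i i = 1) (hl2 : ∀ i j, i < j → l i j = 0) (hl3 : ∀ i j, j < i → l i j ∈ J)
    (hd1 : ∀ i j, i ≠ j → d i j = 0)
    (hu1 : ∀ i, u i i = 1) (hu2 : ∀ i j, j < i → u i j = 0) (hu3 : ∀ i j, i < j → u i j ∈ J)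
    (i j : Fin n) (hij : i ≠ j) : (l * d * u) i j ∈ J := by
  have hld : ∀ i k, (l * d) i k = l i k * d k k := by
    intro i k
    rw [Matrix.mul_apply]
    apply Finset.sum_eq_single
    · intro m _ hm
      rw [hd1 m k hm, mul_zero]
    · intro h; exact absurd (Finset.mem_univ k) h
  rw [Matrix.mul_apply]
  apply Submodule.sum_mem
  intro k _
  rw [hld]
  by_cases hki : k = i
  · subst hki
    rw [hl1 k, one_mul]
    rcases lt_or_gt_of_ne hij with h | h
    · exact Ideal.mul_mem_left _ _ (hu3 k j h)
    · rw [hu2 k j h, mul_zero]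
      exact Submodule.zero_mem _
  · by_cases hkj : k = j
    · subst hkj
      rw [hu1 k, mul_one]
      rcases lt_or_gt_of_ne hij with h | h
      · rw [hl2 i k h, zero_mul]
        exact Submodule.zero_mem _
      · exact Ideal.mul_mem_right _ _ (hl3 i k h)
    · rcases lt_or_gt_of_ne (Ne.symm hki) with h | h
      · rw [hl2 i k h, zero_mul, zero_mul]
        exact Submodule.zero_mem _
      · exact Ideal.mul_mem_right _ _ (Ideal.mul_mem_right _ _ (hl3 i k h))


end IwahoriAux

/-- Iwahori factorization over a discrete valuation ring: a matrix `g ∈ GL_n(O)` whose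
off-diagonal entries lie in `ϖ^β O` factors uniquely as `g = ℓ·d·u` with `ℓ` lower unipotent
with strictly-lower entries in `ϖ^β O`, `d` diagonal with unit entries, and `u` upper
unipotent with strictly-upper entries in `ϖ^β O`; conversely any such product lies in
`GL_n(O)` with off-diagonal entries in `ϖ^β O`. -/
theorem statement14 (O : Type*) [CommRing O] [IsDomain O] [IsDiscreteValuationRing O]
    (ϖ : O) (hϖ : Irreducible ϖ) (n β : ℕ) (hn : 1 ≤ n) (hβ : 1 ≤ β) :
    (∀ g : Matrix (Fin n) (Fin n) O, IsUnit g →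
      (∀ i j : Fin n, i ≠ j → g i j ∈ Ideal.span {ϖ ^ β}) →
      ∃! ldu : Matrix (Fin n) (Fin n) O × Matrix (Fin n) (Fin n) O ×
          Matrix (Fin n) (Fin n) O,
        ((∀ i : Fin n, ldu.1 i i = 1) ∧ (∀ i j : Fin n, i < j → ldu.1 i j = 0) ∧
          (∀ i j : Fin n, j < i → ldu.1 i j ∈ Ideal.span {ϖ ^ β})) ∧
        ((∀ i j : Fin n, i ≠ j → ldu.2.1 i j = 0) ∧ (∀ i : Fin n, IsUnit (ldu.2.1 i i))) ∧
        ((∀ i : Fin n, ldu.2.2 i i = 1) ∧ (∀ i j : Fin n, j < i → ldu.2.2 i j = 0) ∧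
          (∀ i j : Fin n, i < j → ldu.2.2 i j ∈ Ideal.span {ϖ ^ β})) ∧
        g = ldu.1 * ldu.2.1 * ldu.2.2) ∧
    (∀ l d u : Matrix (Fin n) (Fin n) O,
      ((∀ i : Fin n, l i i = 1) ∧ (∀ i j : Fin n, i < j → l i j = 0) ∧
        (∀ i j : Fin n, j < i → l i j ∈ Ideal.span {ϖ ^ β})) →
      ((∀ i j : Fin n, i ≠ j → d i j = 0) ∧ (∀ i : Fin n, IsUnit (d i i))) →
      ((∀ i : Fin n, u i i = 1) ∧ (∀ i j : Fin n, j < i → u i j = 0) ∧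
        (∀ i j : Fin n, i < j → u i j ∈ Ideal.span {ϖ ^ β})) →
      (IsUnit (l * d * u) ∧
        ∀ i j : Fin n, i ≠ j → (l * d * u) i j ∈ Ideal.span {ϖ ^ β})) := by
  classical
  have hJ : ∀ x ∈ Ideal.span {ϖ ^ β}, ¬IsUnit x := by
    intro x hx hux
    rw [Ideal.mem_span_singleton] at hx
    have h1 : IsUnit (ϖ ^ β) := isUnit_of_dvd_unit hx hux
    have h2 : IsUnit ϖ := (isUnit_pow_iff (Nat.one_le_iff_ne_zero.mp hβ)).mp h1
    exact hϖ.not_isUnit h2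
  constructor
  · intro g hg hoff
    obtain ⟨l, d, u, hL, hD, hU, hgl⟩ :=
      IwahoriAux.exists_ldu (Ideal.span {ϖ ^ β}) hJ n g
        ((Matrix.isUnit_iff_isUnit_det g).1 hg) hoff
    refine ⟨(l, d, u), ⟨hL, hD, hU, hgl⟩, ?_⟩
    rintro ⟨l₂, d₂, u₂⟩ ⟨⟨h1, h2, h3⟩, ⟨h4, h5⟩, ⟨h6, h7, h8⟩, h9⟩
    have huniq := IwahoriAux.uniq_ldu h1 h2 h4 h5 h6 h7 hL.1 hL.2.1 hD.1 hD.2 hU.1 hU.2.1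
      (h9.symm.trans hgl)
    exact Prod.ext huniq.1 (Prod.ext huniq.2.1 huniq.2.2)
  · rintro l d u ⟨hl1, hl2, hl3⟩ ⟨hd1, hd2⟩ ⟨hu1, hu2, hu3⟩
    constructor
    · rw [Matrix.isUnit_iff_isUnit_det, Matrix.det_mul, Matrix.det_mul]
      have hLl : l.BlockTriangular OrderDual.toDual := fun i j h => hl2 i j h
      have hUu : u.BlockTriangular id := fun i j h => hu2 i j h
      rw [Matrix.det_of_lowerTriangular l hLl, Matrix.det_of_upperTriangular hUu]
      simp only [hl1, hu1, Finset.prod_const_one, one_mul, mul_one]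
      exact IwahoriAux.isUnit_det_of_diag d hd1 hd2
    · intro i j hij
      exact IwahoriAux.conv_mem (Ideal.span {ϖ ^ β}) hl1 hl2 hl3 hd1 hu1 hu2 hu3 i j hij
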